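/- Let f(x) = ln(1+x) - x + (x²/2)·(1/(1+x/3))² for x ≥ 0. Then the derivative of f at every x > 0 equals -x³·(x+9)/((x+1)·(x+3)³); consequently f is strictly decreasing on (0, ∞) and attains its maximum value 0 at x = 0. -/

import Mathlib

noncomputable def f16 (x : ℝ) : ℝ :=
  Real.log (1 + x) - x + x ^ 2 / 2 * (1 / (1 + x / 3)) ^ 2

lemma f16_hasDerivAt {x : ℝ} (hx : -1 < x) :
    HasDerivAt f16 (-(x ^ 3 * (x + 9)) / ((x + 1) * (x + 3) ^ 3)) x := by
  have h1 : (0:ℝ) < 1 + x := by linarith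
  have h3 : (1 + x / 3) ≠ 0 := by intro h; nlinarith
  have h_log : HasDerivAt (fun y : ℝ => Real.log (1 + y)) (1 / (1 + x)) x := by
    simpa [one_div] using ((hasDerivAt_id' x).const_add 1).log h1.ne'
  have h_inner : HasDerivAt (fun y : ℝ => 1 + y / 3) (1 / 3) x := by
    simpa using ((hasDerivAt_id x).div_const 3).const_add (1:ℝ)
  have h_inv : HasDerivAt (fun y : ℝ => 1 / (1 + y / 3))
      (-(1 / 3) / (1 + x / 3) ^ 2) x := by
    simpa [one_div] using h_inner.fun_inv h3
  have h_sq : HasDerivAt (fun y : ℝ => (1 / (1 + y / 3)) ^ 2)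
      (2 * (1 / (1 + x / 3)) ^ 1 * (-(1 / 3) / (1 + x / 3) ^ 2)) x := by
    simpa using h_inv.fun_pow 2
  have h_poly : HasDerivAt (fun y : ℝ => y ^ 2 / 2) x x := by
    have := (hasDerivAt_pow 2 x).div_const 2
    simpa using this
  have h := ((h_log.sub (hasDerivAt_id x)).add (h_poly.mul h_sq))
  convert h using 1
  · rfl
  · rfl
  · rfl
  have h31 : (x + 3) ≠ 0 := by linarith
  have h11 : (x + 1) ≠ 0 := by linarith
  have e : 1 + x / 3 = (x + 3) / 3 := by ring
  rw [e]
  field_simp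
  ring

lemma f16_antiIci : StrictAntiOn f16 (Set.Ici 0) := by
  have hcont : ContinuousOn f16 (Set.Ici 0) := by
    intro x hx
    exact ((f16_hasDerivAt (by simp at hx; linarith)).continuousAt).continuousWithinAt
  apply strictAntiOn_of_deriv_neg (convex_Ici 0) hcont
  intro x hx
  rw [interior_Ici] at hx
  rw [(f16_hasDerivAt (by linarith [Set.mem_Ioi.mp hx])).deriv]
  have hx0 : (0:ℝ) < x := hx
  apply div_neg_of_neg_of_pos
  · nlinarith [pow_pos hx0 3]
  · positivity

theorem f16_deriv_and_max :
    (∀ x : ℝ, 0 < x →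
      HasDerivAt f16 (-(x ^ 3 * (x + 9)) / ((x + 1) * (x + 3) ^ 3)) x) ∧
    StrictAntiOn f16 (Set.Ioi 0) ∧
    (∀ x : ℝ, 0 ≤ x → f16 x ≤ 0) ∧ f16 0 = 0 := by
  have h0 : f16 0 = 0 := by simp [f16]
  refine ⟨fun x hx => f16_hasDerivAt (by linarith), ?_, ?_, h0⟩
  · exact f16_antiIci.mono Set.Ioi_subset_Ici_self
  · intro x hx
    rcases eq_or_lt_of_le hx with h | h
    · rw [← h, h0]
    · have := f16_antiIci (Set.self_mem_Ici) (Set.mem_Ici.mpr hx) h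
      linarith [this, h0.symm ▸ this]
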